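/- Let p_c(z) = z^n + c\,\overline{z}^k - 1 where c is a positive real number, n \ge 3, 1 \le k \le n-1, and \gcd(n,k) = 1. Let M = \max(1, c), let r be a positive real root with r \neq 1 of the equation x^{n+1} - (1+M)x^n + M = 0, and let R = \max(1, r). Then every zero z of p_c satisfies |z| \le R. -/

import Mathlib

open Complex

/-- Every zero of `p_c(z) = z^n + c ẑ^k - 1` (with `c > 0` real, `n ≥ 3`,
`1 ≤ k ≤ n-1`, `gcd(n,k)=1`) satisfies `|z| ≤ R = max 1 r`, where `r ≠ 1` is a
positive real root of `x^(n+1) - (1+M) x^n + M = 0` with `M = max 1 c`. -/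
theorem harmonic_trinomial_zeros_in_closed_disk
    (n k : ℕ) (hn : 3 ≤ n) (hk1 : 1 ≤ k) (hkn : k ≤ n - 1)
    (hgcd : Nat.gcd n k = 1)
    (c : ℝ) (hc : 0 < c)
    (M : ℝ) (hM : M = max 1 c)
    (r : ℝ) (hr : 0 < r) (hr1 : r ≠ 1)
    (hroot : r ^ (n + 1) - (1 + M) * r ^ n + M = 0)
    (R : ℝ) (hR : R = max 1 r)
    (z : ℂ) (hz : z ^ n + (c : ℂ) * (starRingEnd ℂ) z ^ k - 1 = 0) :
    ‖z‖ ≤ R := by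
  by_contra hcon
  push_neg at hcon
  set t := ‖z‖ with ht
  have ht1 : 1 < t := lt_of_le_of_lt (by rw [hR]; exact le_max_left _ _) hcon
  have htr : r < t := lt_of_le_of_lt (by rw [hR]; exact le_max_right _ _) hcon
  have ht0 : 0 < t := lt_trans one_pos ht1
  have hM1 : 1 ≤ M := hM ▸ le_max_left _ _
  have hcM : c ≤ M := hM ▸ le_max_right _ _
  have hM0 : 0 < M := lt_of_lt_of_le one_pos hM1
  -- Step 1: t^n ≤ 1 + c * t^k
  have hzn : z ^ n = 1 - (c : ℂ) * (starRingEnd ℂ) z ^ k := by linear_combination hz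
  have habs : ‖(c : ℂ) * (starRingEnd ℂ) z ^ k‖ = c * t ^ k := by
    rw [norm_mul, norm_pow, Complex.norm_conj, Complex.norm_real, Real.norm_of_nonneg hc.le]
  have h1 : t ^ n ≤ 1 + c * t ^ k := by
    have h := congrArg (‖·‖) hzn
    rw [norm_pow] at h
    calc t ^ n = ‖1 - (c : ℂ) * (starRingEnd ℂ) z ^ k‖ := h
      _ ≤ ‖(1 : ℂ)‖ + ‖(c : ℂ) * (starRingEnd ℂ) z ^ k‖ := by
          exact norm_sub_le _ _
      _ = 1 + c * t ^ k := by rw [norm_one, habs]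
  -- Step 2: t^n ≤ 1 + M * t^(n-1)
  have hkpow : t ^ k ≤ t ^ (n - 1) := pow_le_pow_right₀ ht1.le hkn
  have h2 : t ^ n ≤ 1 + M * t ^ (n - 1) := by
    have : c * t ^ k ≤ M * t ^ (n - 1) :=
      mul_le_mul hcM hkpow (pow_nonneg ht0.le k) hM0.le
    linarith
  -- Step 3: r^n = M * S(r) where S(x) = ∑_{i<n} x^i
  have hg := geom_sum_mul r n
  have h3 : (r - 1) * (r ^ n - M * ∑ i ∈ Finset.range n, r ^ i) = 0 := by
    linear_combination hroot - M * hg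
  have hr1' : r - 1 ≠ 0 := sub_ne_zero.mpr hr1
  have key : r ^ n = M * ∑ i ∈ Finset.range n, r ^ i := by
    rcases mul_eq_zero.mp h3 with h | h
    · exact absurd h hr1'
    · linarith [sub_eq_zero.mp h]
  -- Step 4: termwise comparison gives S(t) * r^n < S(r) * t^n
  have hsum : (∑ i ∈ Finset.range n, t ^ i) * r ^ n
      < (∑ i ∈ Finset.range n, r ^ i) * t ^ n := by
    rw [Finset.sum_mul, Finset.sum_mul]
    apply Finset.sum_lt_sum_of_nonempty (Finset.nonempty_range_iff.mpr (by omega))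
    intro i hi
    have hi' : i < n := Finset.mem_range.mp hi
    have e1 : r ^ i * r ^ (n - i) = r ^ n := by rw [← pow_add]; congr 1; omega
    have e2 : t ^ i * t ^ (n - i) = t ^ n := by rw [← pow_add]; congr 1; omega
    have h4 : r ^ (n - i) < t ^ (n - i) := pow_lt_pow_left₀ htr hr.le (by omega)
    have hti : 0 < t ^ i := pow_pos ht0 i
    have hri : 0 < r ^ i := pow_pos hr i
    rw [← e1, ← e2]
    nlinarith [mul_pos (mul_pos hti hri) (sub_pos.mpr h4)]
  -- Step 5: M * S(t) < t^n
  have hrn : 0 < r ^ n := pow_pos hr n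
  have step : M * (∑ i ∈ Finset.range n, t ^ i) * r ^ n < t ^ n * r ^ n := by
    calc M * (∑ i ∈ Finset.range n, t ^ i) * r ^ n
        = M * ((∑ i ∈ Finset.range n, t ^ i) * r ^ n) := by ring
      _ < M * ((∑ i ∈ Finset.range n, r ^ i) * t ^ n) :=
          mul_lt_mul_of_pos_left hsum hM0
      _ = (M * ∑ i ∈ Finset.range n, r ^ i) * t ^ n := by ring
      _ = r ^ n * t ^ n := by rw [← key]
      _ = t ^ n * r ^ n := mul_comm _ _
  have hSt_lt : M * (∑ i ∈ Finset.range n, t ^ i) < t ^ n :=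
    lt_of_mul_lt_mul_right step hrn.le
  -- Step 6: 1 + t^(n-1) ≤ S(t), hence t^n ≤ M * S(t)
  have hpair : 1 + t ^ (n - 1) ≤ ∑ i ∈ Finset.range n, t ^ i := by
    have hsub : ({0, n - 1} : Finset ℕ) ⊆ Finset.range n := by
      intro i hi
      simp only [Finset.mem_insert, Finset.mem_singleton] at hi
      rcases hi with h | h <;> simp [Finset.mem_range] <;> omega
    have hle := Finset.sum_le_sum_of_subset_of_nonneg hsub
      (fun i _ _ => pow_nonneg ht0.le i)
    rwa [Finset.sum_pair (by omega : (0 : ℕ) ≠ n - 1), pow_zero] at hle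
  have hfinal : t ^ n ≤ M * ∑ i ∈ Finset.range n, t ^ i := by
    have : 1 + M * t ^ (n - 1) ≤ M * (1 + t ^ (n - 1)) := by nlinarith
    have h5 : M * (1 + t ^ (n - 1)) ≤ M * ∑ i ∈ Finset.range n, t ^ i :=
      mul_le_mul_of_nonneg_left hpair hM0.le
    linarith
  linarith
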